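/- For integers n, m, r ≥ 1 with n ≥ r^(2m-1) and r ≥ m, the quantity (1 - ((r^(2m) - 1)/r^(2m))^n)^m is at least (1/r^m)(1 - m/(2r)). -/

import Mathlib

theorem full_box_prob_lower_bound (n m r : ℕ) (hn : 1 ≤ n) (hm : 1 ≤ m) (hr : 1 ≤ r)
    (hnr : (r : ℝ) ^ (2 * m - 1) ≤ n) (hrm : (m : ℝ) ≤ r) :
    (1 - (((r : ℝ) ^ (2 * m) - 1) / (r : ℝ) ^ (2 * m)) ^ n) ^ m ≥
      (1 / (r : ℝ) ^ m) * (1 - m / (2 * r)) := by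
  have hr1 : (1:ℝ) ≤ r := by exact_mod_cast hr
  have hrpos : (0:ℝ) < r := by linarith
  set R : ℝ := (r:ℝ) ^ (2 * m) with hR
  have hR1 : (1:ℝ) ≤ R := one_le_pow₀ hr1
  have hRpos : (0:ℝ) < R := by linarith
  have hxeq : ((r:ℝ) ^ (2 * m) - 1) / (r:ℝ) ^ (2 * m) = 1 - 1 / R := by
    field_simp
    rw [hR]; ring
  have hx0 : 0 ≤ 1 - 1 / R := by
    have : 1 / R ≤ 1 := by rw [div_le_one hRpos]; exact hR1
    linarith
  -- Step 1: (1 - 1/R)^n ≤ exp (-(n/R))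
  have h1 : (1 - 1 / R) ^ n ≤ Real.exp (-((n : ℝ) / R)) := by
    have hle : 1 - 1 / R ≤ Real.exp (-(1 / R)) := by
      have := Real.add_one_le_exp (-(1 / R)); linarith
    calc (1 - 1 / R) ^ n ≤ (Real.exp (-(1 / R))) ^ n := pow_le_pow_left₀ hx0 hle n
      _ = Real.exp (-((n : ℝ) / R)) := by
          rw [← Real.exp_nat_mul]; ring_nf
  -- Step 2: exp(-(n/R)) ≤ exp(-(1/r))
  have hRsplit : R = (r:ℝ) ^ (2 * m - 1) * r := by
    rw [hR]
    have h2m : 2 * m = (2 * m - 1) + 1 := by omega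
    rw [h2m, pow_succ]
    congr 2
  have h2 : Real.exp (-((n : ℝ) / R)) ≤ Real.exp (-(1 / r)) := by
    apply Real.exp_le_exp.mpr
    have : 1 / (r:ℝ) ≤ (n : ℝ) / R := by
      rw [div_le_div_iff₀ hrpos hRpos, hRsplit]
      nlinarith [hnr, hrpos]
    linarith
  -- Step 3: exp(-(1/r)) ≤ 1 - 1/r + 1/(2*r^2)
  have h3 : Real.exp (-(1 / (r:ℝ))) ≤ 1 - 1 / r + 1 / (2 * r ^ 2) := by
    have hq := Real.quadratic_le_exp_of_nonneg (x := 1 / (r:ℝ)) (by positivity)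
    rw [Real.exp_neg]
    have hepos : 0 < Real.exp (1 / (r:ℝ)) := Real.exp_pos _
    rw [inv_le_iff_one_le_mul₀ hepos]
    have hkey : (1:ℝ) ≤ (1 - 1 / r + 1 / (2 * r ^ 2)) * (1 + 1 / r + (1 / r) ^ 2 / 2) := by
      have h4 : (1 - 1 / (r:ℝ) + 1 / (2 * r ^ 2)) * (1 + 1 / r + (1 / r) ^ 2 / 2)
          = 1 + 1 / (4 * r ^ 4) := by
        field_simp; ring
      rw [h4]
      have : 0 < 1 / (4 * (r:ℝ) ^ 4) := by positivity
      linarith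
    have hcoef : (0:ℝ) ≤ 1 - 1 / r + 1 / (2 * r ^ 2) := by
      have h1r : 1 / (r:ℝ) ≤ 1 := by rw [div_le_one hrpos]; exact hr1
      have : (0:ℝ) < 1 / (2 * r ^ 2) := by positivity
      linarith
    calc (1:ℝ) ≤ (1 - 1 / r + 1 / (2 * r ^ 2)) * (1 + 1 / r + (1 / r) ^ 2 / 2) := hkey
      _ ≤ (1 - 1 / r + 1 / (2 * r ^ 2)) * Real.exp (1 / r) :=
          mul_le_mul_of_nonneg_left hq hcoef
  -- Combine: the "failure probability" is at most 1 - 1/r + 1/(2r^2)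
  have hqle : (((r:ℝ) ^ (2 * m) - 1) / (r:ℝ) ^ (2 * m)) ^ n ≤ 1 - 1 / r + 1 / (2 * r ^ 2) := by
    rw [hxeq]; exact h1.trans (h2.trans h3)
  have hc0 : (0:ℝ) ≤ 1 / r - 1 / (2 * r ^ 2) := by
    rw [sub_nonneg, div_le_div_iff₀ (by positivity) hrpos]
    nlinarith
  have hstep : (1 / (r:ℝ) - 1 / (2 * r ^ 2)) ^ m
      ≤ (1 - (((r:ℝ) ^ (2 * m) - 1) / (r:ℝ) ^ (2 * m)) ^ n) ^ m := by
    apply pow_le_pow_left₀ hc0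
    linarith
  have hfact : (1 / (r:ℝ) - 1 / (2 * r ^ 2)) ^ m
      = (1 / (r:ℝ) ^ m) * (1 - 1 / (2 * r)) ^ m := by
    rw [one_div ((r:ℝ) ^ m), ← inv_pow, ← mul_pow]
    congr 1
    field_simp
  have hbern : 1 - (m:ℝ) / (2 * r) ≤ (1 - 1 / (2 * (r:ℝ))) ^ m := by
    have h2le : (-2:ℝ) ≤ -(1 / (2 * (r:ℝ))) := by
      have : 1 / (2 * (r:ℝ)) ≤ 1 := by rw [div_le_one (by positivity)]; linarith
      linarith
    have := one_add_mul_le_pow h2le m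
    calc 1 - (m:ℝ) / (2 * r) = 1 + (m:ℝ) * (-(1 / (2 * r))) := by ring
      _ ≤ (1 + -(1 / (2 * (r:ℝ)))) ^ m := this
      _ = (1 - 1 / (2 * (r:ℝ))) ^ m := by ring_nf
  have hrm0 : (0:ℝ) ≤ 1 / (r:ℝ) ^ m := by positivity
  calc (1 / (r:ℝ) ^ m) * (1 - (m:ℝ) / (2 * r))
      ≤ (1 / (r:ℝ) ^ m) * (1 - 1 / (2 * (r:ℝ))) ^ m :=
        mul_le_mul_of_nonneg_left hbern hrm0
    _ = (1 / (r:ℝ) - 1 / (2 * r ^ 2)) ^ m := hfact.symm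
    _ ≤ _ := hstep
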